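/- arXiv:2309.09134 — 3 statements merged into one kernel-verified Lean document; each statement's English description precedes it below -/
import Mathlib

section
/- Let P, Q be Bayes nets over a common DAG with alphabet [ℓ], and let L be a local partial coupling of P and Q (a Bayes net over the same DAG on pairs (X_i,Y_i) with Pr[(X_i,Y_i)=(b,b) | parents=(c₁,c₂)] = min(P_{i|Π(i)}(b|c₁), Q_{i|Π(i)}(b|c₂)) and X ∼ P). Then for every w ∈ [ℓ]^n, P(w) − ∏_{i=1}^n min(P_{i|Π(i)}(w_i|w_{Π(i)}), Q_{i|Π(i)}(w_i|w_{Π(i)})) = Pr_L[X = w, Y ≠ w]. -/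
/-- For a local partial coupling L of Bayes nets P and Q over a
common DAG (L has the diagonal CPT condition and X-marginal equal to P), for
every w: P(w) − ∏_i min(Pc i (w_i|w), Qc i (w_i|w)) = Pr_L[X = w, Y ≠ w]. -/
theorem g_eq_prob_X_eq_Y_neq {n ℓ : ℕ}
    (Pc Qc : Fin n → Fin ℓ → (Fin n → Fin ℓ) → ℝ)
    (Lc : Fin n → Fin ℓ × Fin ℓ → (Fin n → Fin ℓ × Fin ℓ) → ℝ)
    (hL0 : ∀ i v z, 0 ≤ Lc i v z)
    (hdiag : ∀ i b z, Lc i (b, b) z =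
      min (Pc i b (fun j => (z j).1)) (Qc i b (fun j => (z j).2)))
    (hXmarg : ∀ w : Fin n → Fin ℓ,
      ∑ z ∈ Finset.univ.filter
          (fun z : Fin n → Fin ℓ × Fin ℓ => (fun j => (z j).1) = w),
        ∏ i, Lc i (z i) z
      = ∏ i, Pc i (w i) w)
    (w : Fin n → Fin ℓ) :
    (∏ i, Pc i (w i) w) - (∏ i, min (Pc i (w i) w) (Qc i (w i) w))
    = ∑ z ∈ Finset.univ.filter
        (fun z : Fin n → Fin ℓ × Fin ℓ =>
          (fun j => (z j).1) = w ∧ (fun j => (z j).2) ≠ w),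
        ∏ i, Lc i (z i) z := by
  classical
  set z0 : Fin n → Fin ℓ × Fin ℓ := fun j => (w j, w j) with hz0
  have hz01 : (fun j => (z0 j).1) = w := by funext j; simp [hz0]
  have hz02 : (fun j => (z0 j).2) = w := by funext j; simp [hz0]
  have h1 : Finset.univ.filter (fun z : Fin n → Fin ℓ × Fin ℓ =>
      (fun j => (z j).1) = w ∧ (fun j => (z j).2) = w) = {z0} := by
    ext z
    simp only [Finset.mem_filter, Finset.mem_univ, true_and, Finset.mem_singleton]
    constructor
    · rintro ⟨ha, hb⟩
      funext j
      have ha' := congrFun ha j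
      have hb' := congrFun hb j
      exact Prod.ext ha' hb'
    · rintro rfl
      exact ⟨hz01, hz02⟩
  have hdiagsum : ∑ z ∈ Finset.univ.filter (fun z : Fin n → Fin ℓ × Fin ℓ =>
      (fun j => (z j).1) = w ∧ (fun j => (z j).2) = w),
      ∏ i, Lc i (z i) z = ∏ i, min (Pc i (w i) w) (Qc i (w i) w) := by
    rw [h1, Finset.sum_singleton]
    refine Finset.prod_congr rfl fun i _ => ?_
    have : z0 i = (w i, w i) := rfl
    rw [this, hdiag, hz01]
  have hsplit := Finset.sum_filter_add_sum_filter_not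
    (Finset.univ.filter (fun z : Fin n → Fin ℓ × Fin ℓ => (fun j => (z j).1) = w))
    (fun z : Fin n → Fin ℓ × Fin ℓ => (fun j => (z j).2) = w)
    (fun z => ∏ i, Lc i (z i) z)
  rw [Finset.filter_filter, Finset.filter_filter] at hsplit
  rw [hXmarg w] at hsplit
  rw [hdiagsum] at hsplit
  linarith [hsplit]
end

section
/- Let P, Q be Bayes nets over a common DAG with n nodes, and let L be a local partial coupling of P and Q as above. Then Z := Pr_L[X ≠ Y] satisfies Z ≤ 2n · d_TV(P, Q). -/
open Finset

private lemma max0_sub_le (x y z : ℝ) : max 0 (x - y) ≤ max 0 (x - z) + max 0 (z - y) := by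
  apply max_le
  · exact add_nonneg (le_max_left 0 _) (le_max_left 0 _)
  · have h1 : x - z ≤ max 0 (x - z) := le_max_right _ _
    have h2 : z - y ≤ max 0 (z - y) := le_max_right _ _
    linarith

private lemma max0_sum {ι : Type*} (s : Finset ι) (f : ι → ℝ) :
    max 0 (∑ i ∈ s, f i) ≤ ∑ i ∈ s, max 0 (f i) := by
  apply max_le
  · exact sum_nonneg fun i _ => le_max_left 0 _
  · exact sum_le_sum fun i _ => le_max_right 0 _

private lemma max0_mul (x c : ℝ) (hc : 0 ≤ c) : max 0 x * c = max 0 (x * c) := by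
  rw [max_mul_of_nonneg _ _ hc, zero_mul]

private lemma max0_antisym (x : ℝ) : max 0 x - max 0 (-x) = x := by
  rcases le_total x 0 with h | h
  · rw [max_eq_left h, max_eq_right (by linarith)]; ring
  · rw [max_eq_right h, max_eq_left (by linarith)]; ring

/-- Fiber-normalization: summing a Bayes-net product of conditionals over
all configurations extending a fixed prefix gives 1. -/
private lemma FN {n : ℕ} {α : Type*} [Fintype α] [DecidableEq α]
    (f : Fin n → (Fin n → α) → ℝ)
    (hloc : ∀ (i : Fin n) (w w' : Fin n → α), (∀ j : Fin n, j ≤ i → w j = w' j) → f i w = f i w')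
    (hnorm : ∀ (i : Fin n) (w : Fin n → α), ∑ b : α, f i (Function.update w i b) = 1) :
    ∀ (d m : ℕ), n ≤ m + d → ∀ u : Fin n → α,
      ∑ w ∈ univ.filter (fun w : Fin n → α => ∀ j : Fin n, (j : ℕ) < m → w j = u j),
        ∏ j ∈ univ.filter (fun j : Fin n => m ≤ (j : ℕ)), f j w = 1 := by
  have base : ∀ m : ℕ, n ≤ m → ∀ u : Fin n → α,
      ∑ w ∈ univ.filter (fun w : Fin n → α => ∀ j : Fin n, (j : ℕ) < m → w j = u j),
        ∏ j ∈ univ.filter (fun j : Fin n => m ≤ (j : ℕ)), f j w = 1 := by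
    intro m hm u
    have h1 : univ.filter (fun j : Fin n => m ≤ (j : ℕ)) = ∅ := by
      ext j
      simp only [mem_filter, mem_univ, true_and, notMem_empty, iff_false, not_le]
      exact lt_of_lt_of_le j.isLt hm
    have h2 : univ.filter (fun w : Fin n → α => ∀ j : Fin n, (j : ℕ) < m → w j = u j) = {u} := by
      ext w
      simp only [mem_filter, mem_univ, true_and, mem_singleton]
      constructor
      · intro h; funext j; exact h j (lt_of_lt_of_le j.isLt hm)
      · rintro rfl j _; rfl
    rw [h1, h2]
    simp
  intro d
  induction d with
  | zero => intro m hm u; exact base m (by omega) u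
  | succ d ih =>
    intro m hm u
    by_cases hnm : n ≤ m
    · exact base m hnm u
    · push_neg at hnm
      set i : Fin n := ⟨m, hnm⟩ with hi
      have hnotmem : i ∉ univ.filter (fun j : Fin n => m + 1 ≤ (j : ℕ)) := by
        simp [hi]
      have hsplit : univ.filter (fun j : Fin n => m ≤ (j : ℕ))
          = insert i (univ.filter (fun j : Fin n => m + 1 ≤ (j : ℕ))) := by
        ext j
        simp only [mem_filter, mem_univ, true_and, mem_insert, Fin.ext_iff, hi]
        omega
      rw [← Finset.sum_fiberwise
        (univ.filter (fun w : Fin n → α => ∀ j : Fin n, (j : ℕ) < m → w j = u j))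
        (fun w => w i)
        (fun w => ∏ j ∈ univ.filter (fun j : Fin n => m ≤ (j : ℕ)), f j w)]
      have hfib : ∀ b : α,
          (univ.filter (fun w : Fin n → α => ∀ j : Fin n, (j : ℕ) < m → w j = u j)).filter
            (fun w => w i = b)
          = univ.filter (fun w : Fin n → α =>
              ∀ j : Fin n, (j : ℕ) < m + 1 → w j = Function.update u i b j) := by
        intro b
        ext w
        simp only [mem_filter, mem_univ, true_and]
        constructor
        · rintro ⟨h1, h2⟩ j hj
          by_cases hjm : (j : ℕ) < m
          · rw [Function.update_of_ne (by simp [Fin.ext_iff, hi]; omega), h1 j hjm]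
          · have : j = i := by simp [Fin.ext_iff, hi]; omega
            rw [this, Function.update_self]; exact h2
        · intro h
          refine ⟨fun j hj => ?_, ?_⟩
          · have := h j (by omega)
            rwa [Function.update_of_ne (by simp [Fin.ext_iff, hi]; omega)] at this
          · have := h i (by simp [hi])
            rwa [Function.update_self] at this
      calc ∑ b : α, ∑ w ∈ (univ.filter (fun w : Fin n → α =>
              ∀ j : Fin n, (j : ℕ) < m → w j = u j)).filter (fun w => w i = b),
            ∏ j ∈ univ.filter (fun j : Fin n => m ≤ (j : ℕ)), f j w
          = ∑ b : α, f i (Function.update u i b) := by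
            apply Finset.sum_congr rfl
            intro b _
            rw [hfib b]
            have hcongr : ∀ w ∈ univ.filter (fun w : Fin n → α =>
                ∀ j : Fin n, (j : ℕ) < m + 1 → w j = Function.update u i b j),
                ∏ j ∈ univ.filter (fun j : Fin n => m ≤ (j : ℕ)), f j w
                = f i (Function.update u i b) *
                  ∏ j ∈ univ.filter (fun j : Fin n => m + 1 ≤ (j : ℕ)), f j w := by
              intro w hw
              simp only [mem_filter, mem_univ, true_and] at hw
              rw [hsplit, Finset.prod_insert hnotmem]
              congr 1
              apply hloc
              intro j hj
              have hj' : (j : ℕ) ≤ m := hj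
              exact hw j (by omega)
            rw [Finset.sum_congr rfl hcongr, ← Finset.mul_sum,
              ih (m + 1) (by omega) (Function.update u i b), mul_one]
        _ = 1 := hnorm i u
section KeyPart
open Finset

variable {n ℓ : ℕ}

private def pre (f : Fin n → (Fin n → Fin ℓ) → ℝ) (k : ℕ) (w : Fin n → Fin ℓ) : ℝ :=
  ∏ j ∈ univ.filter (fun j : Fin n => (j : ℕ) < k), f j w

private def suf (f : Fin n → (Fin n → Fin ℓ) → ℝ) (k : ℕ) (w : Fin n → Fin ℓ) : ℝ :=
  ∏ j ∈ univ.filter (fun j : Fin n => k ≤ (j : ℕ)), f j w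

private lemma prod_split (f : Fin n → (Fin n → Fin ℓ) → ℝ) (k : ℕ) (w : Fin n → Fin ℓ) :
    (∏ j, f j w) = pre f k w * suf f k w := by
  rw [pre, suf, ← Finset.prod_filter_mul_prod_filter_not univ (fun j : Fin n => (j : ℕ) < k)]
  congr 1
  apply Finset.prod_congr _ (fun _ _ => rfl)
  ext j; simp [not_lt]

private lemma pre_congr (f : Fin n → (Fin n → Fin ℓ) → ℝ)
    (hloc : ∀ (i : Fin n) (w w' : Fin n → Fin ℓ),
      (∀ j : Fin n, j ≤ i → w j = w' j) → f i w = f i w')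
    (k : ℕ) (w u : Fin n → Fin ℓ) (h : ∀ j : Fin n, (j : ℕ) < k → w j = u j) :
    pre f k w = pre f k u := by
  apply Finset.prod_congr rfl
  intro j hj
  simp only [mem_filter, mem_univ, true_and] at hj
  apply hloc
  intro j' hj'
  have : (j' : ℕ) ≤ (j : ℕ) := hj'
  exact h j' (by omega)

/-- Key lemma: prefix TV (marginalized with any normalized suffix) is at most full TV. -/
private lemma key (hl : 0 < ℓ) (k : ℕ) (a b c : Fin n → (Fin n → Fin ℓ) → ℝ)
    (haloc : ∀ (i : Fin n) (w w' : Fin n → Fin ℓ),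
      (∀ j : Fin n, j ≤ i → w j = w' j) → a i w = a i w')
    (hbloc : ∀ (i : Fin n) (w w' : Fin n → Fin ℓ),
      (∀ j : Fin n, j ≤ i → w j = w' j) → b i w = b i w')
    (hcloc : ∀ (i : Fin n) (w w' : Fin n → Fin ℓ),
      (∀ j : Fin n, j ≤ i → w j = w' j) → c i w = c i w')
    (hanorm : ∀ (i : Fin n) (w : Fin n → Fin ℓ), ∑ v : Fin ℓ, a i (Function.update w i v) = 1)
    (hbnorm : ∀ (i : Fin n) (w : Fin n → Fin ℓ), ∑ v : Fin ℓ, b i (Function.update w i v) = 1)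
    (hcnorm : ∀ (i : Fin n) (w : Fin n → Fin ℓ), ∑ v : Fin ℓ, c i (Function.update w i v) = 1) :
    ∑ w : Fin n → Fin ℓ, max 0 (pre a k w - pre b k w) * suf c k w
      ≤ ∑ w : Fin n → Fin ℓ, max 0 ((∏ j, a j w) - (∏ j, b j w)) := by
  set y0 : Fin ℓ := ⟨0, hl⟩ with hy0
  set π : (Fin n → Fin ℓ) → (Fin n → Fin ℓ) := fun w j => if (j : ℕ) < k then w j else y0 with hπ
  rw [← Finset.sum_fiberwise univ π (fun w => max 0 (pre a k w - pre b k w) * suf c k w),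
    ← Finset.sum_fiberwise univ π (fun w => max 0 ((∏ j, a j w) - (∏ j, b j w)))]
  apply Finset.sum_le_sum
  intro u _
  by_cases hu : ∀ j : Fin n, k ≤ (j : ℕ) → u j = y0
  · -- good fiber
    have hF : univ.filter (fun w => π w = u)
        = univ.filter (fun w : Fin n → Fin ℓ => ∀ j : Fin n, (j : ℕ) < k → w j = u j) := by
      ext w
      simp only [mem_filter, mem_univ, true_and, hπ, funext_iff]
      constructor
      · intro h j hj
        have := h j
        rwa [if_pos hj] at this
      · intro h j
        by_cases hj : (j : ℕ) < k
        · rw [if_pos hj]; exact h j hj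
        · rw [if_neg hj]; exact (hu j (le_of_not_gt hj)).symm
    have hfib : ∀ j : Fin n, (j : ℕ) < k → u j = u j := fun _ _ => rfl
    have hmem : ∀ w ∈ univ.filter (fun w => π w = u), ∀ j : Fin n, (j : ℕ) < k → w j = u j := by
      intro w hw
      rw [hF] at hw
      simp only [mem_filter, mem_univ, true_and] at hw
      exact hw
    have hc1 : ∑ w ∈ univ.filter (fun w => π w = u), suf c k w = 1 := by
      rw [hF]; exact FN c hcloc hcnorm n k (by omega) u
    have ha1 : ∑ w ∈ univ.filter (fun w => π w = u), suf a k w = 1 := by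
      rw [hF]; exact FN a haloc hanorm n k (by omega) u
    have hb1 : ∑ w ∈ univ.filter (fun w => π w = u), suf b k w = 1 := by
      rw [hF]; exact FN b hbloc hbnorm n k (by omega) u
    have hdiff : ∑ w ∈ univ.filter (fun w => π w = u), ((∏ j, a j w) - (∏ j, b j w))
        = pre a k u - pre b k u := by
      rw [Finset.sum_sub_distrib]
      have h1 : ∑ w ∈ univ.filter (fun w => π w = u), (∏ j, a j w)
          = pre a k u := by
        calc ∑ w ∈ univ.filter (fun w => π w = u), (∏ j, a j w)
            = ∑ w ∈ univ.filter (fun w => π w = u), pre a k u * suf a k w := by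
              apply Finset.sum_congr rfl
              intro w hw
              rw [prod_split a k w, pre_congr a haloc k w u (hmem w hw)]
          _ = pre a k u := by rw [← Finset.mul_sum, ha1, mul_one]
      have h2 : ∑ w ∈ univ.filter (fun w => π w = u), (∏ j, b j w)
          = pre b k u := by
        calc ∑ w ∈ univ.filter (fun w => π w = u), (∏ j, b j w)
            = ∑ w ∈ univ.filter (fun w => π w = u), pre b k u * suf b k w := by
              apply Finset.sum_congr rfl
              intro w hw
              rw [prod_split b k w, pre_congr b hbloc k w u (hmem w hw)]
          _ = pre b k u := by rw [← Finset.mul_sum, hb1, mul_one]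
      rw [h1, h2]
    calc ∑ w ∈ univ.filter (fun w => π w = u), max 0 (pre a k w - pre b k w) * suf c k w
        = ∑ w ∈ univ.filter (fun w => π w = u), max 0 (pre a k u - pre b k u) * suf c k w := by
          apply Finset.sum_congr rfl
          intro w hw
          rw [pre_congr a haloc k w u (hmem w hw), pre_congr b hbloc k w u (hmem w hw)]
      _ = max 0 (pre a k u - pre b k u) := by rw [← Finset.mul_sum, hc1, mul_one]
      _ = max 0 (∑ w ∈ univ.filter (fun w => π w = u), ((∏ j, a j w) - (∏ j, b j w))) := by
          rw [hdiff]
      _ ≤ ∑ w ∈ univ.filter (fun w => π w = u), max 0 ((∏ j, a j w) - (∏ j, b j w)) :=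
          max0_sum _ _
  · -- empty fiber
    push_neg at hu
    obtain ⟨j0, hj0, hne⟩ := hu
    have hF : univ.filter (fun w => π w = u) = ∅ := by
      apply Finset.eq_empty_of_forall_notMem
      intro w hw
      simp only [mem_filter, mem_univ, true_and, hπ, funext_iff] at hw
      have := hw j0
      rw [if_neg (not_lt.mpr hj0)] at this
      exact hne this.symm
    rw [hF]
    simp

end KeyPart
section MorePre
open Finset
variable {n ℓ : ℕ}

private lemma pre_zero (f : Fin n → (Fin n → Fin ℓ) → ℝ) (w) : pre f 0 w = 1 := by
  rw [pre]
  convert Finset.prod_empty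
  ext j; simp

private lemma suf_zero (f : Fin n → (Fin n → Fin ℓ) → ℝ) (w) : suf f 0 w = ∏ i, f i w := by
  rw [suf]
  apply Finset.prod_congr _ (fun _ _ => rfl)
  ext j; simp

private lemma pre_top (f : Fin n → (Fin n → Fin ℓ) → ℝ) (w) : pre f n w = ∏ i, f i w := by
  rw [pre]
  apply Finset.prod_congr _ (fun _ _ => rfl)
  ext j; simpa using j.isLt

private lemma suf_top (f : Fin n → (Fin n → Fin ℓ) → ℝ) (w) : suf f n w = 1 := by
  rw [suf]
  convert Finset.prod_empty
  ext j; simpa using j.isLt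

private lemma suf_succ (f : Fin n → (Fin n → Fin ℓ) → ℝ) (k : ℕ) (hk : k < n) (w) :
    suf f k w = f ⟨k, hk⟩ w * suf f (k + 1) w := by
  rw [suf, suf, show univ.filter (fun j : Fin n => k ≤ (j : ℕ))
      = insert (⟨k, hk⟩ : Fin n) (univ.filter fun j : Fin n => k + 1 ≤ (j : ℕ)) by
    ext j; simp [Fin.ext_iff]; omega]
  rw [Finset.prod_insert (by simp)]

private lemma pre_succ (f : Fin n → (Fin n → Fin ℓ) → ℝ) (k : ℕ) (hk : k < n) (w) :
    pre f (k + 1) w = f ⟨k, hk⟩ w * pre f k w := by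
  rw [pre, pre, show univ.filter (fun j : Fin n => (j : ℕ) < k + 1)
      = insert (⟨k, hk⟩ : Fin n) (univ.filter fun j : Fin n => (j : ℕ) < k) by
    ext j; simp [Fin.ext_iff]; omega]
  rw [Finset.prod_insert (by simp)]

private lemma pre_nonneg (f : Fin n → (Fin n → Fin ℓ) → ℝ) (h : ∀ i w, 0 ≤ f i w) (k w) :
    0 ≤ pre f k w := Finset.prod_nonneg fun j _ => h j w

private lemma suf_nonneg (f : Fin n → (Fin n → Fin ℓ) → ℝ) (h : ∀ i w, 0 ≤ f i w) (k w) :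
    0 ≤ suf f k w := Finset.prod_nonneg fun j _ => h j w

private lemma pre_mono (f g : Fin n → (Fin n → Fin ℓ) → ℝ) (h0 : ∀ i w, 0 ≤ f i w)
    (h : ∀ i w, f i w ≤ g i w) (k w) : pre f k w ≤ pre g k w :=
  Finset.prod_le_prod (fun j _ => h0 j w) (fun j _ => h j w)

end MorePre

/-- For Bayes nets P, Q over a common (topologically ordered) DAG
with n nodes and a local partial coupling L of P and Q,
Z = Pr_L[X ≠ Y] ≤ 2n · d_TV(P,Q), where d_TV(P,Q) = Σ_w max(0, P(w) − Q(w)). -/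
theorem Z_le_two_n_tv {n ℓ : ℕ}
    (Pc Qc : Fin n → Fin ℓ → (Fin n → Fin ℓ) → ℝ)
    (Lc : Fin n → Fin ℓ × Fin ℓ → (Fin n → Fin ℓ × Fin ℓ) → ℝ)
    (hP0 : ∀ i c w, 0 ≤ Pc i c w) (hP1 : ∀ i w, ∑ c, Pc i c w = 1)
    (hQ0 : ∀ i c w, 0 ≤ Qc i c w) (hQ1 : ∀ i w, ∑ c, Qc i c w = 1)
    (hL0 : ∀ i v z, 0 ≤ Lc i v z) (hL1 : ∀ i z, ∑ v, Lc i v z = 1)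
    (hPloc : ∀ i c w w', (∀ j, j < i → w j = w' j) → Pc i c w = Pc i c w')
    (hQloc : ∀ i c w w', (∀ j, j < i → w j = w' j) → Qc i c w = Qc i c w')
    (hLloc : ∀ i v z z', (∀ j, j < i → z j = z' j) → Lc i v z = Lc i v z')
    (hdiag : ∀ i b z, Lc i (b, b) z =
      min (Pc i b (fun j => (z j).1)) (Qc i b (fun j => (z j).2)))
    (hmarg : ∀ i b z, ∑ y, Lc i (b, y) z = Pc i b (fun j => (z j).1)) :
    ∑ z ∈ Finset.univ.filter
        (fun z : Fin n → Fin ℓ × Fin ℓ =>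
          (fun j => (z j).1) ≠ (fun j => (z j).2)),
      ∏ i, Lc i (z i) z
    ≤ 2 * n * ∑ w : Fin n → Fin ℓ,
        max 0 ((∏ i, Pc i (w i) w) - ∏ i, Qc i (w i) w) := by
  classical
  open Finset in
  -- trivial case n = 0
  rcases Nat.eq_zero_or_pos n with hn | hn
  · subst hn
    have h0 : Finset.univ.filter
        (fun z : Fin 0 → Fin ℓ × Fin ℓ => (fun j => (z j).1) ≠ (fun j => (z j).2)) = ∅ := by
      apply Finset.eq_empty_of_forall_notMem
      intro z hz
      simp only [Finset.mem_filter] at hz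
      exact hz.2 (funext fun j => j.elim0)
    rw [h0]
    simp
  -- trivial case ℓ = 0
  rcases Nat.eq_zero_or_pos ℓ with hl | hl
  · subst hl
    have h1 : (Finset.univ : Finset (Fin n → Fin 0 × Fin 0)) = ∅ :=
      Finset.eq_empty_of_forall_notMem fun z _ => (z ⟨0, hn⟩).1.elim0
    have h2 : (Finset.univ : Finset (Fin n → Fin 0)) = ∅ :=
      Finset.eq_empty_of_forall_notMem fun w _ => (w ⟨0, hn⟩).elim0
    rw [h1, Finset.filter_empty, Finset.sum_empty, h2, Finset.sum_empty, mul_zero]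
  -- main case
  set p : Fin n → (Fin n → Fin ℓ) → ℝ := fun i w => Pc i (w i) w with hpdef
  set q : Fin n → (Fin n → Fin ℓ) → ℝ := fun i w => Qc i (w i) w with hqdef
  set mm : Fin n → (Fin n → Fin ℓ) → ℝ := fun i w => min (p i w) (q i w) with hmdef
  have hploc : ∀ (i : Fin n) (w w' : Fin n → Fin ℓ),
      (∀ j : Fin n, j ≤ i → w j = w' j) → p i w = p i w' := by
    intro i w w' h
    show Pc i (w i) w = Pc i (w' i) w'
    rw [h i le_rfl]
    exact hPloc i (w' i) w w' (fun j hj => h j (le_of_lt hj))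
  have hqloc : ∀ (i : Fin n) (w w' : Fin n → Fin ℓ),
      (∀ j : Fin n, j ≤ i → w j = w' j) → q i w = q i w' := by
    intro i w w' h
    show Qc i (w i) w = Qc i (w' i) w'
    rw [h i le_rfl]
    exact hQloc i (w' i) w w' (fun j hj => h j (le_of_lt hj))
  have hpnorm : ∀ (i : Fin n) (w : Fin n → Fin ℓ),
      ∑ v : Fin ℓ, p i (Function.update w i v) = 1 := by
    intro i w
    have h : ∀ v : Fin ℓ, p i (Function.update w i v) = Pc i v w := by
      intro v
      show Pc i (Function.update w i v i) (Function.update w i v) = Pc i v w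
      rw [Function.update_self]
      exact hPloc i v _ w (fun j hj => Function.update_of_ne (ne_of_lt hj) v w)
    rw [Finset.sum_congr rfl (fun v _ => h v)]
    exact hP1 i w
  have hqnorm : ∀ (i : Fin n) (w : Fin n → Fin ℓ),
      ∑ v : Fin ℓ, q i (Function.update w i v) = 1 := by
    intro i w
    have h : ∀ v : Fin ℓ, q i (Function.update w i v) = Qc i v w := by
      intro v
      show Qc i (Function.update w i v i) (Function.update w i v) = Qc i v w
      rw [Function.update_self]
      exact hQloc i v _ w (fun j hj => Function.update_of_ne (ne_of_lt hj) v w)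
    rw [Finset.sum_congr rfl (fun v _ => h v)]
    exact hQ1 i w
  -- total masses
  have hptot : ∑ w : Fin n → Fin ℓ, ∏ i, p i w = 1 := by
    have := FN p hploc hpnorm n 0 (by omega) (fun _ => ⟨0, hl⟩)
    simpa using this
  have hqtot : ∑ w : Fin n → Fin ℓ, ∏ i, q i w = 1 := by
    have := FN q hqloc hqnorm n 0 (by omega) (fun _ => ⟨0, hl⟩)
    simpa using this
  -- total mass of the coupling
  have hgloc : ∀ (i : Fin n) (z z' : Fin n → Fin ℓ × Fin ℓ),
      (∀ j : Fin n, j ≤ i → z j = z' j) → Lc i (z i) z = Lc i (z' i) z' := by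
    intro i z z' h
    rw [h i le_rfl]
    exact hLloc i (z' i) z z' (fun j hj => h j (le_of_lt hj))
  have hgnorm : ∀ (i : Fin n) (z : Fin n → Fin ℓ × Fin ℓ),
      ∑ v : Fin ℓ × Fin ℓ, Lc i (Function.update z i v i) (Function.update z i v) = 1 := by
    intro i z
    have h : ∀ v : Fin ℓ × Fin ℓ,
        Lc i (Function.update z i v i) (Function.update z i v) = Lc i v z := by
      intro v
      rw [Function.update_self]
      exact hLloc i v _ z (fun j hj => Function.update_of_ne (ne_of_lt hj) v z)
    rw [Finset.sum_congr rfl (fun v _ => h v)]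
    exact hL1 i z
  have hgtot : ∑ z : Fin n → Fin ℓ × Fin ℓ, ∏ i, Lc i (z i) z = 1 := by
    have := FN (fun (i : Fin n) (z : Fin n → Fin ℓ × Fin ℓ) => Lc i (z i) z)
      hgloc hgnorm n 0 (by omega) (fun _ => (⟨0, hl⟩, ⟨0, hl⟩))
    simpa using this
  -- diagonal sum
  have hdiagsum : ∑ z ∈ Finset.univ.filter
      (fun z : Fin n → Fin ℓ × Fin ℓ => (fun j => (z j).1) = (fun j => (z j).2)),
      ∏ i, Lc i (z i) z = ∑ w : Fin n → Fin ℓ, ∏ i, mm i w := by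
    have himg : Finset.univ.filter
        (fun z : Fin n → Fin ℓ × Fin ℓ => (fun j => (z j).1) = (fun j => (z j).2))
        = Finset.image (fun w : Fin n → Fin ℓ => fun j => (w j, w j)) Finset.univ := by
      ext z
      simp only [Finset.mem_filter, Finset.mem_univ, true_and, Finset.mem_image]
      constructor
      · intro h
        refine ⟨fun j => (z j).1, ?_⟩
        funext j
        exact Prod.ext rfl (congrFun h j)
      · rintro ⟨w, rfl⟩
        rfl
    rw [himg, Finset.sum_image (fun w _ w' _ h =>
      funext fun j => congrArg Prod.fst (congrFun h j))]
    apply Finset.sum_congr rfl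
    intro w _
    apply Finset.prod_congr rfl
    intro i _
    exact hdiag i (w i) (fun j => (w j, w j))
  -- Z = 1 - diagonal mass
  have hZ : ∑ z ∈ Finset.univ.filter
      (fun z : Fin n → Fin ℓ × Fin ℓ => (fun j => (z j).1) ≠ (fun j => (z j).2)),
      ∏ i, Lc i (z i) z = 1 - ∑ w : Fin n → Fin ℓ, ∏ i, mm i w := by
    have hsplit := Finset.sum_filter_add_sum_filter_not Finset.univ
      (fun z : Fin n → Fin ℓ × Fin ℓ => (fun j => (z j).1) = (fun j => (z j).2))
      (fun z => ∏ i, Lc i (z i) z)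
    rw [hgtot] at hsplit
    have hfe : Finset.univ.filter
        (fun z : Fin n → Fin ℓ × Fin ℓ => (fun j => (z j).1) ≠ (fun j => (z j).2))
        = Finset.univ.filter
        (fun z : Fin n → Fin ℓ × Fin ℓ => ¬ ((fun j => (z j).1) = (fun j => (z j).2))) := by
      ext z; simp [Ne]
    rw [hfe, ← hdiagsum]
    linarith
  rw [hZ]
  -- nonnegativity facts
  have hp0 : ∀ (i : Fin n) (w : Fin n → Fin ℓ), 0 ≤ p i w := fun i w => hP0 i (w i) w
  have hq0 : ∀ (i : Fin n) (w : Fin n → Fin ℓ), 0 ≤ q i w := fun i w => hQ0 i (w i) w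
  have hm0 : ∀ (i : Fin n) (w : Fin n → Fin ℓ), 0 ≤ mm i w :=
    fun i w => le_min (hp0 i w) (hq0 i w)
  have hmq : ∀ (i : Fin n) (w : Fin n → Fin ℓ), mm i w ≤ q i w := fun i w => min_le_right _ _
  -- telescoping
  have htel : ∀ w : Fin n → Fin ℓ, (∏ i, p i w) - (∏ i, mm i w)
      = ∑ k ∈ Finset.range n, (pre mm k w * suf p k w - pre mm (k+1) w * suf p (k+1) w) := by
    intro w
    rw [Finset.sum_range_sub' (fun k => pre mm k w * suf p k w) n,
      pre_zero, suf_zero, pre_top, suf_top, one_mul, mul_one]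
  set D : ℝ := ∑ w : Fin n → Fin ℓ, max 0 ((∏ i, p i w) - ∏ i, q i w) with hD
  -- per-index bound
  have hstep : ∀ k ∈ Finset.range n,
      ∑ w : Fin n → Fin ℓ, (pre mm k w * suf p k w - pre mm (k+1) w * suf p (k+1) w)
      ≤ 2 * D := by
    intro k hk
    have hkn : k < n := Finset.mem_range.mp hk
    set i : Fin n := ⟨k, hkn⟩ with hidef
    have hdiffw : ∀ w : Fin n → Fin ℓ,
        pre mm k w * suf p k w - pre mm (k+1) w * suf p (k+1) w
        = pre mm k w * suf p (k+1) w * (p i w - mm i w) := by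
      intro w
      rw [suf_succ p k hkn w, pre_succ mm k hkn w]
      ring
    have hpm : ∀ w : Fin n → Fin ℓ, p i w - mm i w = max 0 (p i w - q i w) := by
      intro w
      rcases le_total (p i w) (q i w) with h | h
      · rw [show mm i w = p i w from min_eq_left h, max_eq_left (by linarith)]
        ring
      · rw [show mm i w = q i w from min_eq_right h, max_eq_right (by linarith)]
    calc ∑ w : Fin n → Fin ℓ, (pre mm k w * suf p k w - pre mm (k+1) w * suf p (k+1) w)
        = ∑ w : Fin n → Fin ℓ, pre mm k w * suf p (k+1) w * max 0 (p i w - q i w) := by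
          apply Finset.sum_congr rfl; intro w _; rw [hdiffw w, hpm w]
      _ ≤ ∑ w : Fin n → Fin ℓ, pre q k w * suf p (k+1) w * max 0 (p i w - q i w) := by
          apply Finset.sum_le_sum
          intro w _
          apply mul_le_mul_of_nonneg_right _ (le_max_left 0 _)
          exact mul_le_mul_of_nonneg_right (pre_mono mm q hm0 hmq k w)
            (suf_nonneg p hp0 (k+1) w)
      _ = ∑ w : Fin n → Fin ℓ,
            max 0 (pre q k w * suf p k w - pre q (k+1) w * suf p (k+1) w) := by
          apply Finset.sum_congr rfl
          intro w _
          have hfac : pre q k w * suf p k w - pre q (k+1) w * suf p (k+1) w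
              = (p i w - q i w) * (pre q k w * suf p (k+1) w) := by
            rw [suf_succ p k hkn w, pre_succ q k hkn w]
            ring
          rw [hfac, ← max0_mul _ _ (mul_nonneg (pre_nonneg q hq0 k w)
            (suf_nonneg p hp0 (k+1) w))]
          ring
      _ ≤ ∑ w : Fin n → Fin ℓ,
            (max 0 (pre q k w * suf p k w - ∏ j, p j w)
              + max 0 ((∏ j, p j w) - pre q (k+1) w * suf p (k+1) w)) := by
          apply Finset.sum_le_sum
          intro w _
          exact max0_sub_le _ _ _
      _ = (∑ w : Fin n → Fin ℓ, max 0 (pre q k w - pre p k w) * suf p k w)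
          + ∑ w : Fin n → Fin ℓ, max 0 (pre p (k+1) w - pre q (k+1) w) * suf p (k+1) w := by
          rw [Finset.sum_add_distrib]
          congr 1
          · apply Finset.sum_congr rfl
            intro w _
            rw [max0_mul _ _ (suf_nonneg p hp0 k w), prod_split p k w, ← sub_mul]
          · apply Finset.sum_congr rfl
            intro w _
            rw [max0_mul _ _ (suf_nonneg p hp0 (k+1) w), prod_split p (k+1) w, ← sub_mul]
      _ ≤ (∑ w : Fin n → Fin ℓ, max 0 ((∏ j, q j w) - ∏ j, p j w))
          + ∑ w : Fin n → Fin ℓ, max 0 ((∏ j, p j w) - ∏ j, q j w) := by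
          apply add_le_add
          · exact key hl k q p p hqloc hploc hploc hqnorm hpnorm hpnorm
          · exact key hl (k+1) p q p hploc hqloc hploc hpnorm hqnorm hpnorm
      _ = 2 * D := by
          have hsym : ∑ w : Fin n → Fin ℓ, max 0 ((∏ j, q j w) - ∏ j, p j w) = D := by
            have hzero : ∑ w : Fin n → Fin ℓ,
                (max 0 ((∏ j, p j w) - ∏ j, q j w)
                  - max 0 ((∏ j, q j w) - ∏ j, p j w)) = 0 := by
              have hpt : ∀ w : Fin n → Fin ℓ,
                  max 0 ((∏ j, p j w) - ∏ j, q j w)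
                    - max 0 ((∏ j, q j w) - ∏ j, p j w)
                  = (∏ j, p j w) - ∏ j, q j w := by
                intro w
                have := max0_antisym ((∏ j, p j w) - ∏ j, q j w)
                rw [neg_sub] at this
                exact this
              rw [Finset.sum_congr rfl (fun w _ => hpt w), Finset.sum_sub_distrib,
                hptot, hqtot]
              ring
            rw [Finset.sum_sub_distrib] at hzero
            rw [hD]
            linarith
          rw [hsym, hD]
          ring
  -- assemble
  have hfinal : 1 - ∑ w : Fin n → Fin ℓ, ∏ i, mm i w ≤ 2 * n * D := by
    calc 1 - ∑ w : Fin n → Fin ℓ, ∏ i, mm i w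
        = ∑ w : Fin n → Fin ℓ, ((∏ i, p i w) - ∏ i, mm i w) := by
          rw [Finset.sum_sub_distrib, hptot]
      _ = ∑ w : Fin n → Fin ℓ, ∑ k ∈ Finset.range n,
            (pre mm k w * suf p k w - pre mm (k+1) w * suf p (k+1) w) := by
          exact Finset.sum_congr rfl (fun w _ => htel w)
      _ = ∑ k ∈ Finset.range n, ∑ w : Fin n → Fin ℓ,
            (pre mm k w * suf p k w - pre mm (k+1) w * suf p (k+1) w) :=
          Finset.sum_comm
      _ ≤ ∑ k ∈ Finset.range n, 2 * D := Finset.sum_le_sum hstep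
      _ = 2 * n * D := by
          rw [Finset.sum_const, Finset.card_range, nsmul_eq_mul]
          ring
  exact hfinal
end

section
/- Let F : {0,1}^n → {0,1} be a Boolean function computed by a circuit with m gates, and let P be the associated Bayes net distribution on {0,1}^{n+m+1} in which X ∈ {0,1}^n is uniform, Y = f(X) ∈ {0,1}^m records all gate values deterministically, and Z is the OR of the output gate Y_m with an independent uniform random bit. Then d_TV(P, U) = |A|/2^{n+m+1} + (1 − 1/2^m), where U is uniform on {0,1}^{n+m+1} and A = {x ∈ {0,1}^n : F(x) = 1}. -/
/-- Let F : {0,1}^n → {0,1} be computed by a circuit with m gates,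
f : {0,1}^n → {0,1}^m listing all gate values (with last gate computing F), and
P the Bayes net distribution on {0,1}^{n+m+1} in which X is uniform, Y = f(X),
and Z is the OR of Y_m with an independent uniform bit, i.e.
P(x,y,z) = 0 if y ≠ f(x); P(x,f(x),1) = 2^{−n} and P(x,f(x),0) = 0 if F(x)=1;
P(x,f(x),0) = P(x,f(x),1) = 2^{−n−1} if F(x)=0. Then
d_TV(P, U) = |A|/2^{n+m+1} + (1 − 1/2^m), where A = {x : F(x) = 1}. -/
theorem tv_circuit_bayes_net_uniform (n m : ℕ) (hm : 0 < m)
    (F : (Fin n → Bool) → Bool) (f : (Fin n → Bool) → (Fin m → Bool))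
    (hout : ∀ x, f x ⟨m - 1, by omega⟩ = F x)
    (P : (Fin n → Bool) × (Fin m → Bool) × Bool → ℝ)
    (hP : ∀ x y z, P (x, y, z) =
      if y ≠ f x then 0
      else if F x then (if z then ((2 : ℝ) ^ n)⁻¹ else 0)
      else ((2 : ℝ) ^ (n + 1))⁻¹) :
    (1 / 2) * ∑ w : (Fin n → Bool) × (Fin m → Bool) × Bool,
        |P w - ((2 : ℝ) ^ (n + m + 1))⁻¹|
    = ((Finset.univ.filter (fun x : Fin n → Bool => F x = true)).card : ℝ)
        / 2 ^ (n + m + 1)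
      + (1 - 1 / 2 ^ m) := by
  classical
  set u : ℝ := ((2 : ℝ) ^ (n + m + 1))⁻¹ with hu
  have hupos : 0 < u := by positivity
  have hule : u ≤ ((2 : ℝ) ^ (n + 1))⁻¹ := by
    rw [hu]
    apply inv_anti₀ (by positivity)
    apply pow_le_pow_right₀ (by norm_num)
    omega
  have hule' : u ≤ ((2 : ℝ) ^ n)⁻¹ := by
    rw [hu]
    apply inv_anti₀ (by positivity)
    apply pow_le_pow_right₀ (by norm_num)
    omega
  rw [Fintype.sum_prod_type]
  have key : ∀ x : Fin n → Bool,
      (∑ p : (Fin m → Bool) × Bool, |P (x, p.1, p.2) - u|)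
      = ((2 : ℝ) ^ m - 1) * (2 * u) +
        (if F x then ((2 : ℝ) ^ n)⁻¹ else 2 * (((2 : ℝ) ^ (n + 1))⁻¹ - u)) := by
    intro x
    rw [Fintype.sum_prod_type]
    rw [← Finset.add_sum_erase _ _ (Finset.mem_univ (f x))]
    have h1 : (∑ z : Bool, |P (x, f x, z) - u|)
        = (if F x then ((2 : ℝ) ^ n)⁻¹ else 2 * (((2 : ℝ) ^ (n + 1))⁻¹ - u)) := by
      rw [Fintype.sum_bool]
      by_cases hF : F x
      · have e1 : P (x, f x, true) = ((2 : ℝ) ^ n)⁻¹ := by simp [hP, hF]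
        have e2 : P (x, f x, false) = 0 := by simp [hP, hF]
        rw [e1, e2, zero_sub, abs_neg, abs_of_pos hupos,
          abs_of_nonneg (by linarith), if_pos hF]
        ring
      · have e1 : P (x, f x, true) = ((2 : ℝ) ^ (n + 1))⁻¹ := by simp [hP, hF]
        have e2 : P (x, f x, false) = ((2 : ℝ) ^ (n + 1))⁻¹ := by simp [hP, hF]
        rw [e1, e2, abs_of_nonneg (by linarith), if_neg hF]
        ring
    have h2 : (∑ y ∈ Finset.univ.erase (f x), ∑ z : Bool, |P (x, y, z) - u|)
        = ((2 : ℝ) ^ m - 1) * (2 * u) := by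
      have hterm : ∀ y ∈ Finset.univ.erase (f x),
          (∑ z : Bool, |P (x, y, z) - u|) = 2 * u := by
        intro y hy
        have hy' : y ≠ f x := (Finset.mem_erase.mp hy).1
        rw [Fintype.sum_bool]
        simp only [hP, if_pos hy']
        rw [zero_sub, abs_neg, abs_of_pos hupos]
        ring
      rw [Finset.sum_congr rfl hterm, Finset.sum_const, nsmul_eq_mul]
      have hcard : (Finset.univ.erase (f x)).card = 2 ^ m - 1 := by
        rw [Finset.card_erase_of_mem (Finset.mem_univ _), Finset.card_univ]
        simp [Fintype.card_fun]
      rw [hcard]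
      have : ((2 ^ m - 1 : ℕ) : ℝ) = (2 : ℝ) ^ m - 1 := by
        rw [Nat.cast_sub (Nat.one_le_two_pow)]
        push_cast
        ring
      rw [this]
    rw [h1, h2]
    ring
  rw [Finset.sum_congr rfl (fun x _ => key x)]
  rw [Finset.sum_add_distrib, Finset.sum_const, Finset.sum_ite, Finset.sum_const,
    Finset.sum_const, Finset.card_univ]
  have hN : (Fintype.card (Fin n → Bool) : ℝ) = 2 ^ n := by
    simp [Fintype.card_fun]
  set A := (Finset.univ.filter (fun x : Fin n → Bool => F x = true)).card with hA
  have hB : ((Finset.univ.filter (fun x : Fin n → Bool => ¬ F x = true)).card : ℝ)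
      = 2 ^ n - A := by
    have := Finset.card_filter_add_card_filter_not
      (s := Finset.univ) (p := fun x : Fin n → Bool => F x = true)
    rw [Finset.card_univ] at this
    have hcb : Fintype.card (Fin n → Bool) = 2 ^ n := by simp [Fintype.card_fun]
    rw [hcb] at this
    have : ((Finset.univ.filter (fun x : Fin n → Bool => ¬ F x = true)).card : ℕ)
        = 2 ^ n - A := by omega
    rw [this, Nat.cast_sub]
    · push_cast; ring
    · omega
  simp only [nsmul_eq_mul, smul_eq_mul, hN]
  rw [hB]
  have e1 : (2 : ℝ) ^ (n + m + 1) ≠ 0 := by positivity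
  have e2 : (2 : ℝ) ^ (n + 1) ≠ 0 := by positivity
  have e3 : (2 : ℝ) ^ n ≠ 0 := by positivity
  have e4 : (2 : ℝ) ^ m ≠ 0 := by positivity
  rw [hu]
  field_simp
  ring
end
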